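/- Let κ > 0, γ ∈ (0, 1/κ), a ∈ [0, κ/8), and define the sequence α₀ = 2a, α_{ℓ} = α_{ℓ−1}(1−κγ)/(1−4α_{ℓ−1}γ) for ℓ ≥ 1. Then for all ℓ ≥ 0, α_ℓ ≤ 2a ((1−κγ)/(1−8aγ))^ℓ; in particular the sequence (α_ℓ) is nonincreasing and Σ_{ℓ=0}^{p−1} α_ℓ ≤ 2a(1−8aγ)/(κγ−8aγ) for every p ≥ 1. -/

import Mathlib

theorem stmt5 (κ γ a : ℝ) (hκ : 0 < κ) (hγ : γ ∈ Set.Ioo 0 (1 / κ))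
    (ha : a ∈ Set.Ico 0 (κ / 8))
    (α : ℕ → ℝ) (hα0 : α 0 = 2 * a)
    (hαrec : ∀ ℓ, α (ℓ + 1) = α ℓ * (1 - κ * γ) / (1 - 4 * α ℓ * γ)) :
    (∀ ℓ, α ℓ ≤ 2 * a * ((1 - κ * γ) / (1 - 8 * a * γ)) ^ ℓ) ∧
    (∀ ℓ, α (ℓ + 1) ≤ α ℓ) ∧
    (∀ p, 1 ≤ p →
      ∑ ℓ ∈ Finset.range p, α ℓ ≤ 2 * a * (1 - 8 * a * γ) / (κ * γ - 8 * a * γ)) := by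
  obtain ⟨hγ0, hγ1⟩ := hγ
  obtain ⟨ha0, ha1⟩ := ha
  have hκγ : κ * γ < 1 := by
    have := (lt_div_iff₀ hκ).mp hγ1; linarith
  have h8a : 8 * a < κ := by linarith
  have hden : 0 < 1 - 8 * a * γ := by nlinarith
  set r := (1 - κ * γ) / (1 - 8 * a * γ) with hr
  have hr0 : 0 ≤ r := div_nonneg (by nlinarith) hden.le
  have hr1 : r < 1 := (div_lt_one hden).mpr (by nlinarith)
  have hinv : ∀ ℓ, 0 ≤ α ℓ ∧ α ℓ ≤ 2 * a := by
    intro ℓ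
    induction ℓ with
    | zero => rw [hα0]; constructor <;> linarith
    | succ n ih =>
      obtain ⟨h1, h2⟩ := ih
      have hd : 0 < 1 - 4 * α n * γ := by nlinarith
      rw [hαrec]
      refine ⟨div_nonneg (mul_nonneg h1 (by nlinarith)) hd.le, ?_⟩
      have : α n * (1 - κ * γ) / (1 - 4 * α n * γ) ≤ α n := by
        rw [div_le_iff₀ hd]
        nlinarith [mul_nonneg (mul_nonneg hγ0.le h1) (show (0:ℝ) ≤ κ - 4 * α n by linarith)]
      linarith
  have hstep : ∀ ℓ, α (ℓ + 1) ≤ r * α ℓ := by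
    intro ℓ
    obtain ⟨h1, h2⟩ := hinv ℓ
    have hd : 0 < 1 - 4 * α ℓ * γ := by nlinarith
    rw [hαrec, div_le_iff₀ hd, hr, div_mul_eq_mul_div, div_mul_eq_mul_div,
      le_div_iff₀ hden]
    nlinarith [mul_nonneg (mul_nonneg (mul_nonneg (show (0:ℝ) ≤ 1 - κ * γ by nlinarith) h1) hγ0.le)
      (show (0:ℝ) ≤ 8 * a - 4 * α ℓ by linarith)]
  have hbound : ∀ ℓ, α ℓ ≤ 2 * a * r ^ ℓ := by
    intro ℓ
    induction ℓ with
    | zero => rw [hα0]; simp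
    | succ n ih =>
      calc α (n + 1) ≤ r * α n := hstep n
        _ ≤ r * (2 * a * r ^ n) := by
            exact mul_le_mul_of_nonneg_left ih hr0
        _ = 2 * a * r ^ (n + 1) := by ring
  have hmono : ∀ ℓ, α (ℓ + 1) ≤ α ℓ := by
    intro ℓ
    have := hstep ℓ
    have h1 := (hinv ℓ).1
    nlinarith
  refine ⟨hbound, hmono, ?_⟩
  intro p _
  have hsum : ∑ ℓ ∈ Finset.range p, α ℓ ≤ ∑ ℓ ∈ Finset.range p, 2 * a * r ^ ℓ :=
    Finset.sum_le_sum fun i _ => hbound i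
  have hgeom : ∑ ℓ ∈ Finset.range p, r ^ ℓ ≤ 1 / (1 - r) := by
    have h1r : 0 < 1 - r := by linarith
    rw [geom_sum_eq hr1.ne]
    have heq : (r ^ p - 1) / (r - 1) = (1 - r ^ p) / (1 - r) := by
      rw [div_eq_div_iff (show r - 1 ≠ 0 by intro h; exact h1r.ne' (by linarith)) h1r.ne']
      ring
    rw [heq, div_le_div_iff₀ h1r h1r]
    nlinarith [pow_nonneg hr0 p]
  have h1r : 1 - r = (κ * γ - 8 * a * γ) / (1 - 8 * a * γ) := by
    rw [hr, eq_div_iff hden.ne', sub_mul, div_mul_cancel₀ _ hden.ne']; ring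
  have hfin : 2 * a * (1 / (1 - r)) = 2 * a * (1 - 8 * a * γ) / (κ * γ - 8 * a * γ) := by
    rw [h1r]
    have : 0 < κ * γ - 8 * a * γ := by nlinarith
    field_simp
  calc ∑ ℓ ∈ Finset.range p, α ℓ ≤ ∑ ℓ ∈ Finset.range p, 2 * a * r ^ ℓ := hsum
    _ = 2 * a * ∑ ℓ ∈ Finset.range p, r ^ ℓ := by rw [Finset.mul_sum]
    _ ≤ 2 * a * (1 / (1 - r)) := by
        exact mul_le_mul_of_nonneg_left hgeom (by linarith)
    _ = _ := hfin
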